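/- If $G$ is a non-trivial group, then the quandle ring $\mathbf{k}[\operatorname{Conj}(G)]$ contains a non-trivial idempotent. -/

import Mathlib

/-- The conjugation quandle of a group: same carrier, operation `x * y = y x y⁻¹`. -/
def ConjQ (G : Type*) := G

instance {G : Type*} [Group G] : Mul (ConjQ G) :=
  ⟨fun x y => show G from (show G from y) * (show G from x) * (show G from y)⁻¹⟩

private lemma MA_add_apply {k M : Type*} [Semiring k] (f g : MonoidAlgebra k M) (x : M) :
    (f + g).coeff x = f.coeff x + g.coeff x := rfl

/-- For a non-trivial group `G`, the quandle ring `k[Conj(G)]` has a non-trivial idempotent. -/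
theorem stmt6 {G : Type*} [Group G] [Nontrivial G] (k : Type*) [CommRing k] [IsDomain k]
    (hk : ∃ a : k, a ≠ 0 ∧ a ≠ 1) :
    ∃ u : MonoidAlgebra k (ConjQ G), u * u = u ∧ u ≠ 0 ∧
      ∀ x : ConjQ G, u ≠ MonoidAlgebra.single x (1 : k) := by
  obtain ⟨a, ha0, ha1⟩ := hk
  obtain ⟨y, hy⟩ := exists_ne (1 : G)
  set e : ConjQ G := (1 : G) with he
  set z : ConjQ G := y with hz
  have hze : z ≠ e := hy
  have hee : e * e = e := show (1 : G) * 1 * 1⁻¹ = 1 by group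
  have hez : e * z = e := show y * 1 * y⁻¹ = 1 by group
  have hze' : z * e = z := show (1 : G) * y * 1⁻¹ = y by group
  have hzz : z * z = z := show y * y * y⁻¹ = y by group
  set u : MonoidAlgebra k (ConjQ G) :=
    MonoidAlgebra.single e a + MonoidAlgebra.single z (1 - a) with hu
  have hb0 : (1 : k) - a ≠ 0 := sub_ne_zero.mpr (Ne.symm ha1)
  refine ⟨u, ?_, ?_, ?_⟩
  · rw [hu, add_mul, mul_add, mul_add, MonoidAlgebra.single_mul_single,
      MonoidAlgebra.single_mul_single, MonoidAlgebra.single_mul_single,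
      MonoidAlgebra.single_mul_single, hee, hez, hze', hzz]
    have e1 : a * a + a * (1 - a) = a := by ring
    have e2 : (1 - a) * a + (1 - a) * (1 - a) = 1 - a := by ring
    rw [← MonoidAlgebra.single_add, ← MonoidAlgebra.single_add, e1, e2]
  · intro h
    have h' : (u.coeff : ConjQ G →₀ k) = (0 : ConjQ G →₀ k) := congrArg MonoidAlgebra.coeff h
    have h1 := congrArg (fun f : ConjQ G →₀ k => f e) h'
    classical
    simp only [hu, MA_add_apply, MonoidAlgebra.coeff_single, Finsupp.single_apply, if_pos rfl,
      if_neg hze, add_zero, Finsupp.zero_apply] at h1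
    exact ha0 h1
  · intro x h
    have h' : (u.coeff : ConjQ G →₀ k) = Finsupp.single x 1 := congrArg MonoidAlgebra.coeff h
    have h1 := congrArg (fun f : ConjQ G →₀ k => f e) h'
    classical
    simp only [hu, MA_add_apply, MonoidAlgebra.coeff_single, Finsupp.single_apply, if_pos rfl,
      if_neg hze, add_zero] at h1
    by_cases hxe : x = e
    · rw [if_pos hxe] at h1
      exact ha1 h1
    · rw [if_neg hxe] at h1
      exact ha0 h1
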